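/- Consider the tree T with two labels {1, 2} built from the substitution matrix M = [[0,2],[1,0]] with root labeled 1 (so each vertex labeled 1 has two forward neighbors labeled 2, and each vertex labeled 2 has one forward neighbor labeled 1). Define φ : V → ℝ by φ(x) = 0 if |x| is even, and φ(x) = ± 2^{-k} on vertices of sphere 2k+1 chosen with alternating signs so that the two forward neighbors of each vertex in an even sphere carry values +2^{-k} and -2^{-k}. Then φ ∈ ℓ²(V), φ ≠ 0, and the adjacency operator L satisfies Lφ = 0; in particular 0 is an eigenvalue of L. -/

import Mathlib

set_option maxHeartbeats 1000000

/-- Vertices of the tree `T(M,1)` for `M = [[0,2],[1,0]]` with root labeled `1`: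
`(false, s)` is a label-1 vertex at sphere `2|s|`, determined by the binary choices
`s` made at its label-1 ancestors; `(true, s)` with `s ≠ []` is a label-2 vertex at
sphere `2|s| - 1`.  The root is `(false, [])`. -/
def TreeV : Type := {p : Bool × List Bool // p.1 = true → p.2 ≠ []}

/-- Adjacency: a label-1 vertex `(false, s)` is adjacent to its parent `(true, s)`
(when `s ≠ []`) and to its two children `(true, b :: s)`, `b ∈ Bool`; a label-2
vertex `(true, s)` is adjacent to its parent `(false, t)` with `s = b :: t` and to
its single child `(false, s)`. -/
def treeAdj (x y : TreeV) : Prop :=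
  (x.1.1 = false ∧ y.1.1 = true ∧ (y.1.2 = x.1.2 ∨ ∃ b, y.1.2 = b :: x.1.2)) ∨
  (y.1.1 = false ∧ x.1.1 = true ∧ (x.1.2 = y.1.2 ∨ ∃ b, x.1.2 = b :: y.1.2))

/-- The eigenfunction: `0` on even spheres (label-1 vertices); on a label-2 vertex of
sphere `2k+1` with choice word `t` (`|t| = k+1`) the value `±2^{-k}`, the sign being
`(-1)^k` times the sign of the root-level choice. -/
noncomputable def treePhi (x : TreeV) : ℝ :=
  if x.1.1 = false then 0
  else (if x.1.2.getLast! = true then 1 else -1) * (-(1/2) : ℝ) ^ (x.1.2.length - 1)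

instance : DecidableEq TreeV := fun a b => decidable_of_iff (a.1 = b.1) Subtype.ext_iff.symm

lemma listSummable : Summable (fun s : List Bool => ((1:ℝ)/4) ^ (s.length - 1)) := by
  rw [← List.equivSigmaTuple.symm.summable_iff]
  have key : ∀ p : Σ n, Fin n → Bool,
      ((fun s : List Bool => ((1:ℝ)/4) ^ (s.length - 1)) ∘ List.equivSigmaTuple.symm) p
        = ((1:ℝ)/4) ^ (p.1 - 1) := by
    rintro ⟨n, f⟩
    simp [List.equivSigmaTuple]
  rw [show ((fun s : List Bool => ((1:ℝ)/4) ^ (s.length - 1)) ∘ List.equivSigmaTuple.symm)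
      = fun p : Σ n, Fin n → Bool => ((1:ℝ)/4) ^ (p.1 - 1) from funext key]
  rw [summable_sigma_of_nonneg (fun _ => by positivity)]
  constructor
  · intro n; exact (hasSum_fintype _).summable
  · have : ∀ n : ℕ, ∑' _ : Fin n → Bool, ((1:ℝ)/4) ^ (n - 1) = 2 ^ n * ((1:ℝ)/4) ^ (n-1) := by
      intro n
      rw [tsum_fintype, Finset.sum_const, Finset.card_univ, Fintype.card_fun]
      simp [mul_comm]
    rw [funext this]
    apply Summable.of_nonneg_of_le (fun n => by positivity)
      (f := fun n => 4 * ((1:ℝ)/2) ^ n)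
    · intro n
      cases n with
      | zero => norm_num
      | succ m =>
        simp only [Nat.add_sub_cancel]
        calc ((2:ℝ))^(m+1) * ((1/4):ℝ)^m
            = 2 * ((2*(1/2):ℝ))^m * (1/2)^m := by
              rw [pow_succ, show ((1:ℝ)/4) = (1/2)*(1/2) by norm_num, mul_pow, mul_pow]; ring
          _ = 2 * (1/2)^m := by norm_num
          _ ≤ 4 * (1/2)^(m+1) := by rw [pow_succ]; ring_nf; rfl
    · exact (summable_geometric_of_lt_one (by norm_num) (by norm_num)).mul_left 4

lemma phiSummable : Summable (fun v : TreeV => (treePhi v) ^ 2) := by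
  have hG : Summable (fun p : Bool × List Bool => ((1:ℝ)/4) ^ (p.2.length - 1)) := by
    rw [summable_prod_of_nonneg (fun _ => by positivity)]
    exact ⟨fun _ => listSummable, (hasSum_fintype _).summable⟩
  have hG' : Summable (fun v : TreeV => ((1:ℝ)/4) ^ (v.1.2.length - 1)) :=
    hG.comp_injective Subtype.val_injective
  apply Summable.of_nonneg_of_le (fun v => sq_nonneg _) _ hG'
  intro v
  rcases v with ⟨⟨b, s⟩, hv⟩
  cases b with
  | false => simp [treePhi]
  | true =>
    simp only [treePhi]
    norm_num
    rw [← pow_mul, pow_mul']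
    norm_num

lemma getLast!_cons (b : Bool) {s : List Bool} (hs : s ≠ []) :
    (b :: s).getLast! = s.getLast! := by
  rcases s with _ | ⟨a, t⟩
  · exact absurd rfl hs
  · simp [List.getLast!]

open scoped Classical in
/-- `treePhi` is a nonzero `ℓ²` eigenfunction of the adjacency operator
`(Lφ)(x) = Σ_{y ∼ x} φ(y)` with eigenvalue `0`; in particular `0` is an eigenvalue
of `L` on this tree (which comes from `M = [[0,2],[1,0]]` with `M_{j,j} = 0`). -/
theorem tree_zero_eigenvalue :
    Summable (fun v : TreeV => (treePhi v) ^ 2) ∧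
    treePhi ≠ 0 ∧
    ∀ x : TreeV, ∑' y : TreeV, (if treeAdj x y then treePhi y else 0) = 0 := by
  refine ⟨phiSummable, ?_, ?_⟩
  · intro h
    have := congrFun h ⟨(true, [true]), by simp⟩
    simp [treePhi, List.getLast!] at this
    exact one_ne_zero this
  · intro x
    rcases x with ⟨⟨b, s⟩, hx⟩
    cases b with
    | true =>
      -- all neighbors are label-1 vertices, where φ vanishes
      have hz : ∀ y : TreeV, (if treeAdj ⟨(true, s), hx⟩ y then treePhi y else 0) = 0 := by
        intro y
        split
        · rename_i h
          rcases h with ⟨h1, -⟩ | ⟨h1, -⟩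
          · simp at h1
          · simp [treePhi, h1]
        · rfl
      simp only [hz]
      exact tsum_zero
    | false =>
      set x : TreeV := ⟨(false, s), hx⟩ with hxdef
      set c₁ : TreeV := ⟨(true, true :: s), fun _ => List.cons_ne_nil _ _⟩ with hc₁
      set c₂ : TreeV := ⟨(true, false :: s), fun _ => List.cons_ne_nil _ _⟩ with hc₂
      have hadj1 : treeAdj x c₁ := Or.inl ⟨rfl, rfl, Or.inr ⟨true, rfl⟩⟩
      have hadj2 : treeAdj x c₂ := Or.inl ⟨rfl, rfl, Or.inr ⟨false, rfl⟩⟩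
      rcases s with _ | ⟨a, t⟩
      · -- the root
        have ne12 : c₁ ≠ c₂ := fun h => by
          have := congrArg (fun v : TreeV => v.1.2) h; simp [hc₁, hc₂] at this
        rw [tsum_eq_sum (s := ({c₁, c₂} : Finset TreeV)) ?_]
        · rw [Finset.sum_insert (by simp [ne12]), Finset.sum_singleton,
            if_pos hadj1, if_pos hadj2]
          simp [treePhi, hc₁, hc₂, List.getLast!]
        · intro y hy
          rw [if_neg]
          rintro (⟨-, h1, h2 | ⟨b, hb⟩⟩ | ⟨-, hxt, -⟩)
          · exact y.2 h1 h2
          · apply hy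
            have hy' : y = ⟨(true, [b]), fun _ => List.cons_ne_nil _ _⟩ :=
              Subtype.ext (Prod.ext h1 hb)
            cases b
            · simp [hy', hc₁, hc₂, Subtype.ext_iff]
              exact Finset.mem_insert_of_mem (Finset.mem_singleton_self _)
            · simp [hy', hc₁, hc₂, Subtype.ext_iff]
              exact Finset.mem_insert_self _ _
          · simp [hxdef] at hxt
      · -- a non-root label-1 vertex, with parent
        set p : TreeV := ⟨(true, a :: t), fun _ => List.cons_ne_nil _ _⟩ with hp
        have hadjp : treeAdj x p := Or.inl ⟨rfl, rfl, Or.inl rfl⟩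
        have ne12 : c₁ ≠ c₂ := fun h => by
          have := congrArg (fun v : TreeV => v.1.2) h; simp [hc₁, hc₂] at this
        have ne1p : c₁ ≠ p := fun h => by
          have := congrArg (fun v : TreeV => v.1.2.length) h; simp [hc₁, hp] at this
        have ne2p : c₂ ≠ p := fun h => by
          have := congrArg (fun v : TreeV => v.1.2.length) h; simp [hc₂, hp] at this
        rw [tsum_eq_sum (s := ({c₁, c₂, p} : Finset TreeV)) ?_]
        · rw [Finset.sum_insert (by simp [ne12, ne1p]),
            Finset.sum_insert (by simp [ne2p]),
            Finset.sum_singleton, if_pos hadj1, if_pos hadj2, if_pos hadjp]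
          have hgl : ∀ b : Bool, ((b :: a :: t).getLast!) = (a :: t).getLast! :=
            fun b => getLast!_cons b (List.cons_ne_nil _ _)
          simp only [treePhi, hc₁, hc₂, hp, hgl, List.length_cons, Nat.add_sub_cancel]
          norm_num
          rw [pow_succ]
          split <;> ring
        · intro y hy
          rw [if_neg]
          rintro (⟨-, h1, h2 | ⟨b, hb⟩⟩ | ⟨-, hxt, -⟩)
          · apply hy
            have hy' : y = p := Subtype.ext (Prod.ext h1 h2)
            simp [hy']
          · apply hy
            have hy' : y = ⟨(true, b :: a :: t), fun _ => List.cons_ne_nil _ _⟩ :=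
              Subtype.ext (Prod.ext h1 hb)
            cases b
            · simp [hy', hc₁, hc₂, Subtype.ext_iff]
              exact Finset.mem_insert_of_mem (Finset.mem_insert_self _ _)
            · simp [hy', hc₁, hc₂, Subtype.ext_iff]
              exact Finset.mem_insert_self _ _
          · simp [hxdef] at hxt
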